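/- For every family (ε_p) indexed by the prime numbers with ε_p ∈ {−1, 0, 1} for every prime p, the infinite product ∏_{p prime} (1 − ε_p·p^{−2})^{−1} converges and satisfies ∏_{p prime} (1 − ε_p·p^{−2})^{−1} ≥ π²/15. (This is the content of Lemma 3.2(a): for every integer D the Euler product ζ_D(2) = ∏_p (1 − (D/p)·p^{−2})^{−1}, with (D/p) the Kronecker symbol, satisfies ζ_D(2) ≥ ζ(4)/ζ(2) = π²/15.) -/

import Mathlib

open Real

namespace EulerLB

noncomputable def F (ε : Nat.Primes → ℝ) (p : Nat.Primes) : ℝ :=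
  (1 - ε p / ((p : ℕ) : ℝ) ^ 2)⁻¹

lemma sq_ge (p : Nat.Primes) : (4 : ℝ) ≤ ((p : ℕ) : ℝ) ^ 2 := by
  have : (2 : ℝ) ≤ ((p : ℕ) : ℝ) := by exact_mod_cast p.2.two_le
  nlinarith

lemma ratio_le (ε : Nat.Primes → ℝ) (hε : ∀ p, |ε p| ≤ 1) (p : Nat.Primes) :
    |ε p / ((p : ℕ) : ℝ) ^ 2| ≤ (((p : ℕ) : ℝ) ^ 2)⁻¹ := by
  have h4 := sq_ge p
  rw [abs_div, abs_of_nonneg (by positivity : (0:ℝ) ≤ ((p : ℕ) : ℝ) ^ 2)]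
  rw [div_le_iff₀ (by linarith), inv_mul_cancel₀ (by linarith)]
  exact hε p

lemma base_pos (ε : Nat.Primes → ℝ) (hε : ∀ p, |ε p| ≤ 1) (p : Nat.Primes) :
    (1:ℝ)/2 ≤ 1 - ε p / ((p : ℕ) : ℝ) ^ 2 := by
  have h := ratio_le ε hε p
  have h4 := sq_ge p
  have : (((p : ℕ) : ℝ) ^ 2)⁻¹ ≤ 1/4 := by
    rw [inv_le_comm₀ (by linarith) (by norm_num)]; linarith
  have := abs_le.mp (h.trans this)
  linarith [this.2]

lemma F_pos (ε : Nat.Primes → ℝ) (hε : ∀ p, |ε p| ≤ 1) (p : Nat.Primes) :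
    0 < F ε p := by
  have := base_pos ε hε p
  rw [F]; positivity

lemma summable_log (ε : Nat.Primes → ℝ) (hε : ∀ p, |ε p| ≤ 1) :
    Summable fun p : Nat.Primes => Real.log (F ε p) := by
  have hs : Summable fun p : Nat.Primes => 2 * (((p : ℕ) : ℝ) ^ (-2 : ℝ)) := by
    exact (Nat.Primes.summable_rpow.mpr (by norm_num)).mul_left 2
  refine hs.of_norm_bounded fun p => ?_
  have h4 := sq_ge p
  set x := ε p / ((p : ℕ) : ℝ) ^ 2 with hx
  have hxle : |x| ≤ (((p : ℕ) : ℝ) ^ 2)⁻¹ := ratio_le ε hε p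
  have hx2 : (((p : ℕ) : ℝ) ^ 2)⁻¹ ≤ 1/4 := by
    rw [inv_le_comm₀ (by linarith) (by norm_num)]; linarith
  have hxlt : |x| < 1 := lt_of_le_of_lt (hxle.trans hx2) (by norm_num)
  have key := abs_log_sub_add_sum_range_le hxlt 0
  simp only [Finset.range_zero, Finset.sum_empty, zero_add, pow_one] at key
  have hlog : Real.log (F ε p) = -Real.log (1 - x) := by
    rw [F, Real.log_inv]
  rw [Real.norm_eq_abs, hlog, abs_neg]
  have h1 : (1:ℝ)/2 ≤ 1 - |x| := by
    have := hxle.trans hx2; linarith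
  have : |x| / (1 - |x|) ≤ |x| / (1/2) := by
    apply div_le_div_of_nonneg_left (abs_nonneg x) (by norm_num) h1
  have h2 : |x| / (1/2) = 2 * |x| := by ring
  have hrw : ((p : ℕ) : ℝ) ^ (-2 : ℝ) = (((p : ℕ) : ℝ) ^ 2)⁻¹ := by
    rw [rpow_neg (by positivity), ← rpow_natCast ((p:ℕ):ℝ) 2]
    norm_num
  calc |Real.log (1 - x)| ≤ |x| / (1 - |x|) := key
    _ ≤ 2 * |x| := by rw [← h2]; exact this
    _ ≤ 2 * (((p : ℕ) : ℝ) ^ (-2:ℝ)) := by rw [hrw]; linarith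

lemma hasProd_F (ε : Nat.Primes → ℝ) (hε : ∀ p, |ε p| ≤ 1) :
    HasProd (F ε) (rexp (∑' p : Nat.Primes, Real.log (F ε p))) := by
  have h := (summable_log ε hε).hasSum.rexp
  exact h.congr_fun fun p => (Real.exp_log (F_pos ε hε p)).symm

lemma complex_euler (s : ℕ) (hs : 1 < s) (c : Nat.Primes → ℝ)
    (hc : ∀ p : Nat.Primes, (1 - c p / ((p : ℕ) : ℝ) ^ 2) = 1 - (((p:ℕ):ℝ) ^ s)⁻¹)
    (hc1 : ∀ p, |c p| ≤ 1) (z : ℝ) (hz : riemannZeta s = (z : ℂ)) :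
    HasProd (F c) z := by
  have h1 : 1 < (s : ℂ).re := by simpa using hs
  have hC := riemannZeta_eulerProduct_hasProd h1
  have hR := hasProd_F c hc1
  have hmap := hR.map Complex.ofRealHom Complex.continuous_ofReal
  have heq : (Complex.ofRealHom ∘ F c) = fun p : Nat.Primes => (1 - (p : ℂ) ^ (-(s:ℂ)))⁻¹ := by
    funext p
    have hp0 : ((p : ℕ) : ℂ) ≠ 0 := by
      exact_mod_cast (Nat.cast_ne_zero (R := ℂ)).mpr p.2.pos.ne'
    have : (p : ℂ) ^ (-(s : ℂ)) = (((p:ℕ):ℂ) ^ s)⁻¹ := by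
      rw [show (-(s:ℂ)) = ((-(s:ℤ) : ℤ) : ℂ) by push_cast; ring, Complex.cpow_intCast]
      rw [zpow_neg, zpow_natCast]
    rw [this]
    have := hc p
    simp only [Function.comp_apply, F, Complex.ofRealHom_eq_coe]
    rw [this]
    push_cast
    ring
  rw [heq] at hmap
  have := hmap.unique hC
  rw [hz] at this
  have hzz : rexp (∑' p : Nat.Primes, Real.log (F c p)) = z := by
    rw [show (Complex.ofRealHom (rexp (∑' p : Nat.Primes, Real.log (F c p)))) = ((rexp (∑' p : Nat.Primes, Real.log (F c p)) : ℝ) : ℂ) from rfl] at this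
    exact_mod_cast this
  rw [← hzz]
  exact hR

lemma hasProd_zeta2 : HasProd (F fun _ => 1) (π ^ 2 / 6) := by
  refine complex_euler 2 one_lt_two _ (fun p => by norm_num) (fun p => by norm_num)
    (π ^ 2 / 6) ?_
  rw [show ((2:ℕ):ℂ) = (2:ℂ) by norm_num, riemannZeta_two]
  push_cast; ring

lemma hasProd_zeta4 : HasProd (F fun p => ((((p:ℕ)):ℝ) ^ 2)⁻¹) (π ^ 4 / 90) := by
  refine complex_euler 4 (by norm_num) _ (fun p => ?_) (fun p => ?_) (π ^ 4 / 90) ?_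
  · have h4 := sq_ge p
    rw [div_eq_mul_inv, ← mul_inv]
    rw [← pow_add]
  · have h4 := sq_ge p
    rw [abs_of_nonneg (by positivity)]
    rw [inv_le_one_iff₀]
    right; linarith
  · rw [show ((4:ℕ):ℂ) = (4:ℂ) by norm_num, riemannZeta_four]
    push_cast; ring

lemma abs_neg_one (p : Nat.Primes) : |(-1 : ℝ)| ≤ 1 := by norm_num
lemma abs_one (p : Nat.Primes) : |(1 : ℝ)| ≤ 1 := by norm_num
lemma abs_inv_sq (p : Nat.Primes) : |((((p:ℕ)):ℝ) ^ 2)⁻¹| ≤ 1 := by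
  have := sq_ge p
  rw [abs_of_nonneg (by positivity), inv_le_one_iff₀]; right; linarith

lemma log_decomp (p : Nat.Primes) :
    Real.log (F (fun _ => -1) p) =
      Real.log (F (fun q => ((((q:ℕ)):ℝ) ^ 2)⁻¹) p) - Real.log (F (fun _ => 1) p) := by
  have hx := (F_pos (fun q => ((((q:ℕ)):ℝ) ^ 2)⁻¹) abs_inv_sq p).ne'
  have hy := (F_pos (fun _ => 1) abs_one p).ne'
  have key : F (fun _ => (-1:ℝ)) p = F (fun q => ((((q:ℕ)):ℝ) ^ 2)⁻¹) p / F (fun _ => 1) p := by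
    have b1 := base_pos (fun _ => (-1:ℝ)) abs_neg_one p
    have b2 := base_pos (fun q => ((((q:ℕ)):ℝ) ^ 2)⁻¹) abs_inv_sq p
    have b3 := base_pos (fun _ => (1:ℝ)) abs_one p
    have ha : (0:ℝ) < ((p:ℕ):ℝ)^2 := by have := sq_ge p; linarith
    simp only [F] at b1 b2 b3 ⊢
    have n1 : (1:ℝ) - -1 / ((p:ℕ):ℝ)^2 ≠ 0 := by intro h; rw [h] at b1; norm_num at b1
    have n2 : (1:ℝ) - (((p:ℕ):ℝ)^2)⁻¹ / ((p:ℕ):ℝ)^2 ≠ 0 := by intro h; rw [h] at b2; norm_num at b2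
    have n3 : (1:ℝ) - 1 / ((p:ℕ):ℝ)^2 ≠ 0 := by intro h; rw [h] at b3; norm_num at b3
    rw [eq_div_iff (inv_ne_zero n3), ← mul_inv, inv_inj]
    field_simp
    ring
  rw [key, Real.log_div hx hy]

end EulerLB

open EulerLB Real in
/-- Lemma 3.2(a): for any choice of signs `ε_p ∈ {−1, 0, 1}`, the Euler product
`∏_p (1 − ε_p p^{-2})⁻¹` over all primes converges and is at least `ζ(4)/ζ(2) = π²/15`. -/
theorem euler_product_lower_bound (ε : Nat.Primes → ℝ)
    (hε : ∀ p, ε p = -1 ∨ ε p = 0 ∨ ε p = 1) :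
    Multipliable (fun p : Nat.Primes => (1 - ε p / ((p : ℕ) : ℝ) ^ 2)⁻¹) ∧
      Real.pi ^ 2 / 15 ≤ ∏' p : Nat.Primes, (1 - ε p / ((p : ℕ) : ℝ) ^ 2)⁻¹ := by
  have hε1 : ∀ p, |ε p| ≤ 1 := fun p => by rcases hε p with h|h|h <;> rw [h] <;> norm_num
  have hP := hasProd_F ε hε1
  refine ⟨hP.multipliable, ?_⟩
  have htp : ∏' p : Nat.Primes, (1 - ε p / ((p : ℕ) : ℝ) ^ 2)⁻¹
      = rexp (∑' p : Nat.Primes, Real.log (F ε p)) := hP.tprod_eq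
  have hmono : ∑' p : Nat.Primes, Real.log (F (fun _ => -1) p)
      ≤ ∑' p : Nat.Primes, Real.log (F ε p) := by
    refine Summable.tsum_le_tsum (fun p => ?_) (summable_log _ abs_neg_one) (summable_log _ hε1)
    refine Real.log_le_log (F_pos _ abs_neg_one p) ?_
    simp only [F]
    refine inv_anti₀ ((base_pos _ hε1 p).trans_lt' (by norm_num)) ?_
    have hE := (abs_le.mp (hε1 p)).1
    have ha : (0:ℝ) < ((p:ℕ):ℝ)^2 := by have := sq_ge p; linarith
    have : (-1:ℝ) / ((p:ℕ):ℝ)^2 ≤ ε p / ((p:ℕ):ℝ)^2 := by gcongr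
    linarith
  -- evaluate the product for ε ≡ -1
  have hsub : ∑' p : Nat.Primes, Real.log (F (fun _ => -1) p)
      = (∑' p : Nat.Primes, Real.log (F (fun q => ((((q:ℕ)):ℝ) ^ 2)⁻¹) p))
        - ∑' p : Nat.Primes, Real.log (F (fun _ => 1) p) := by
    rw [← Summable.tsum_sub (summable_log _ abs_inv_sq) (summable_log _ abs_one)]
    exact tsum_congr log_decomp
  have e4 : rexp (∑' p : Nat.Primes, Real.log (F (fun q => ((((q:ℕ)):ℝ) ^ 2)⁻¹) p))
      = π ^ 4 / 90 :=
    (hasProd_F _ abs_inv_sq).unique hasProd_zeta4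
  have e2 : rexp (∑' p : Nat.Primes, Real.log (F (fun _ => 1) p)) = π ^ 2 / 6 :=
    (hasProd_F _ abs_one).unique hasProd_zeta2
  have hval : rexp (∑' p : Nat.Primes, Real.log (F (fun _ => -1) p)) = π ^ 2 / 15 := by
    rw [hsub, Real.exp_sub, e4, e2]
    have hpi : (Real.pi : ℝ) ≠ 0 := Real.pi_ne_zero
    field_simp
    ring
  rw [htp, ← hval]
  exact Real.exp_le_exp.mpr hmono
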